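/- Let f : I → I be a C¹ interval map with finitely many critical points (points where Df = 0). Then there exists ε > 0 such that: for every interval J' ⊆ I sharing an endpoint with I and satisfying |J'| ≤ ε, and every connected component J of f^{−1}(J'), either J shares an endpoint with I and f : J → J' is a bijection, or f maps both endpoints of J to the endpoint of J' that is not an endpoint of I. -/

import Mathlib

open Set

/-- The reflection `y ↦ C - y` as a homeomorphism of `ℝ`. -/
def stmt17ReflHomeo (C : ℝ) : ℝ ≃ₜ ℝ where
  toFun := fun y => C - y
  invFun := fun y => C - y
  left_inv := fun y => by ring
  right_inv := fun y => by ring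
  continuous_toFun := by continuity
  continuous_invFun := by continuity

lemma stmt17ReflHomeo_coe (C : ℝ) : ⇑(stmt17ReflHomeo C) = fun y => C - y := rfl

lemma stmt17_csInf_const_sub (C : ℝ) {s : Set ℝ} (hne : s.Nonempty) (hbdd : BddAbove s) :
    sInf ((fun y => C - y) '' s) = C - sSup s := by
  have hlb : C - sSup s ∈ lowerBounds ((fun y => C - y) '' s) := by
    rintro z ⟨y, hy, rfl⟩
    have := le_csSup hbdd hy
    simp only
    linarith
  apply le_antisymm
  · have h1 : sSup s ≤ C - sInf ((fun y => C - y) '' s) := by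
      apply csSup_le hne
      intro y hy
      have h2 : sInf ((fun y => C - y) '' s) ≤ C - y := csInf_le ⟨_, hlb⟩ ⟨y, hy, rfl⟩
      linarith
    linarith
  · exact le_csInf (hne.image _) hlb

lemma stmt17_csSup_const_sub (C : ℝ) {s : Set ℝ} (hne : s.Nonempty) (hbdd : BddBelow s) :
    sSup ((fun y => C - y) '' s) = C - sInf s := by
  have hub : C - sInf s ∈ upperBounds ((fun y => C - y) '' s) := by
    rintro z ⟨y, hy, rfl⟩
    have := csInf_le hbdd hy
    simp only
    linarith
  apply le_antisymm
  · exact csSup_le (hne.image _) hub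
  · have h1 : C - sSup ((fun y => C - y) '' s) ≤ sInf s := by
      apply le_csInf hne
      intro y hy
      have h2 : C - y ≤ sSup ((fun y => C - y) '' s) := le_csSup ⟨_, hub⟩ ⟨y, hy, rfl⟩
      linarith
    linarith

/-- The key one-sided lemma: near the left endpoint. -/
lemma stmt17_key (a b : ℝ) (hab : a < b) (f : ℝ → ℝ) (f' : ℝ → ℝ)
    (hf : ∀ x ∈ Set.Icc a b, HasDerivAt f (f' x) x)
    (hf'c : ContinuousOn f' (Set.Icc a b))
    (hcrit : {x ∈ Set.Icc a b | f' x = 0}.Finite)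
    (hmaps : Set.MapsTo f (Set.Icc a b) (Set.Icc a b)) :
    ∃ ε > 0, ∀ c ∈ Set.Icc a b, c - a ≤ ε →
        ∀ x ∈ Set.Icc a b, f x ∈ Set.Icc a c →
          ∀ J : Set ℝ, J = connectedComponentIn (Set.Icc a b ∩ f ⁻¹' Set.Icc a c) x →
            ((a ∈ J ∨ b ∈ J) ∧ Set.BijOn f J (Set.Icc a c)) ∨
            (f (sInf J) = c ∧ f (sSup J) = c) := by
  classical
  set V : Set ℝ := insert (f a) (insert (f b) (f '' {x ∈ Icc a b | f' x = 0})) with hV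
  have hVfin : V.Finite := ((hcrit.image f).insert _).insert _
  obtain ⟨ε, hε, hεV⟩ : ∃ ε > 0, ∀ v ∈ V, v ≤ a + ε → v ≤ a := by
    rcases (V ∩ Ioi a).eq_empty_or_nonempty with h | h
    · refine ⟨1, one_pos, fun v hv _ => ?_⟩
      by_contra hva
      exact absurd (h ▸ (⟨hv, lt_of_not_ge hva⟩ : v ∈ V ∩ Ioi a)) (notMem_empty v)
    · obtain ⟨m, hm, hmin⟩ := Set.exists_min_image (V ∩ Ioi a) id (hVfin.inter_of_left _) h
      refine ⟨(m - a) / 2, by have h2 : a < m := hm.2; linarith, fun v hv hle => ?_⟩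
      by_contra hva
      have hvW : v ∈ V ∩ Ioi a := ⟨hv, lt_of_not_ge hva⟩
      have := hmin v hvW
      simp only [id] at this
      have := hm.2
      simp only [mem_Ioi] at this
      linarith
  refine ⟨ε, hε, fun c hc hcε x hx hfx J hJ => ?_⟩
  set S : Set ℝ := Icc a b ∩ f ⁻¹' Icc a c with hS
  have hfc : ContinuousOn f (Icc a b) := fun y hy => (hf y hy).continuousAt.continuousWithinAt
  have hxS : x ∈ S := ⟨hx, hfx⟩
  have hJx : x ∈ J := hJ ▸ mem_connectedComponentIn hxS
  have hJS : J ⊆ S := hJ ▸ connectedComponentIn_subset _ _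
  have hJI : J ⊆ Icc a b := fun y hy => (hJS hy).1
  have hJconn : IsPreconnected J := hJ ▸ isPreconnected_connectedComponentIn
  have hSclosed : IsClosed S := hfc.preimage_isClosed_of_isClosed isClosed_Icc isClosed_Icc
  have hJclosed : IsClosed J := by
    rw [← closure_subset_iff_isClosed]
    have h1 : closure J ⊆ S := hSclosed.closure_subset_iff.mpr hJS
    exact hJ ▸ hJconn.closure.subset_connectedComponentIn (subset_closure hJx) h1
  have hJne : J.Nonempty := ⟨x, hJx⟩
  have hbdd : BddBelow J := ⟨a, fun y hy => (hJI hy).1⟩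
  have hbddA : BddAbove J := ⟨b, fun y hy => (hJI hy).2⟩
  set p := sInf J with hp
  set q := sSup J with hq
  have hpJ : p ∈ J := hJclosed.csInf_mem hJne hbdd
  have hqJ : q ∈ J := hJclosed.csSup_mem hJne hbddA
  have hpq : p ≤ q := csInf_le_csSup hJne hbdd hbddA
  have hJeq : J = Icc p q := by
    apply subset_antisymm
    · exact fun y hy => ⟨csInf_le hbdd hy, le_csSup hbddA hy⟩
    · exact (hJconn.ordConnected).out hpJ hqJ
  have hmax : ∀ t : Set ℝ, IsPreconnected t → x ∈ t → t ⊆ S → t ⊆ J := fun t ht hxt htS =>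
    hJ ▸ ht.subset_connectedComponentIn hxt htS
  have hfa_ge : ∀ y ∈ Icc a b, a ≤ f y := fun y hy => (hmaps hy).1
  have hxpq : x ∈ Icc p q := hJeq ▸ hJx
  have hL1 : a < p → f p = c := by
    intro hap
    have hpI : p ∈ Icc a b := hJI hpJ
    have hfp : f p ∈ Icc a c := (hJS hpJ).2
    by_contra hne
    have hlt : f p < c := lt_of_le_of_ne hfp.2 hne
    have hev : ∀ᶠ y in nhds p, f y < c :=
      Filter.Tendsto.eventually_lt_const hlt (hf p hpI).continuousAt
    obtain ⟨δ, hδ, hδ'⟩ := Metric.eventually_nhds_iff.mp hev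
    set p' := max a (p - δ/2) with hp'
    have hp'p : p' < p := max_lt hap (by linarith)
    have hsub : Icc p' q ⊆ S := by
      intro y hy
      rcases le_or_gt p y with h | h
      · exact hJS (hJeq ▸ (⟨h, hy.2⟩ : y ∈ Icc p q))
      · have hyI : y ∈ Icc a b := ⟨le_trans (le_max_left _ _) hy.1, le_trans h.le hpI.2⟩
        have hd : dist y p < δ := by
          rw [Real.dist_eq, abs_of_nonpos (by linarith)]
          have h1 : p - δ/2 ≤ y := le_trans (le_max_right a _) hy.1
          linarith
        exact ⟨hyI, hfa_ge y hyI, (hδ' hd).le⟩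
    have hin : p' ∈ J := hmax _ isPreconnected_Icc
      ⟨le_trans hp'p.le hxpq.1, hxpq.2⟩ hsub ⟨le_refl _, le_trans hp'p.le hpq⟩
    exact absurd (csInf_le hbdd hin) (not_le.mpr hp'p)
  have hL2 : q < b → f q = c := by
    intro hqb
    have hqI : q ∈ Icc a b := hJI hqJ
    have hfq : f q ∈ Icc a c := (hJS hqJ).2
    by_contra hne
    have hlt : f q < c := lt_of_le_of_ne hfq.2 hne
    have hev : ∀ᶠ y in nhds q, f y < c :=
      Filter.Tendsto.eventually_lt_const hlt (hf q hqI).continuousAt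
    obtain ⟨δ, hδ, hδ'⟩ := Metric.eventually_nhds_iff.mp hev
    set q' := min b (q + δ/2) with hq'
    have hq'q : q < q' := lt_min hqb (by linarith)
    have hsub : Icc p q' ⊆ S := by
      intro y hy
      rcases le_or_gt y q with h | h
      · exact hJS (hJeq ▸ (⟨hy.1, h⟩ : y ∈ Icc p q))
      · have hyI : y ∈ Icc a b := ⟨le_trans hqI.1 h.le, le_trans hy.2 (min_le_left _ _)⟩
        have hd : dist y q < δ := by
          rw [Real.dist_eq, abs_of_nonneg (by linarith)]
          have h1 : y ≤ q + δ/2 := le_trans hy.2 (min_le_right _ _)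
          linarith
        exact ⟨hyI, hfa_ge y hyI, (hδ' hd).le⟩
    have hin : q' ∈ J := hmax _ isPreconnected_Icc
      ⟨hxpq.1, le_trans hxpq.2 hq'q.le⟩ hsub ⟨le_trans hpq hq'q.le, le_refl _⟩
    exact absurd (le_csSup hbddA hin) (not_le.mpr hq'q)
  rcases eq_or_lt_of_le hc.1 with hca | hca
  · -- c = a : both endpoints map to a = c
    right
    have h1 : f p ∈ Icc a c := (hJS hpJ).2
    have h2 : f q ∈ Icc a c := (hJS hqJ).2
    exact ⟨le_antisymm h1.2 (hca ▸ h1.1), le_antisymm h2.2 (hca ▸ h2.1)⟩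
  -- a < c
  have hcε' : c ≤ a + ε := by linarith
  have hA : ∀ y ∈ J, f' y = 0 → f y = a := by
    intro y hy hy0
    have hyI := hJI hy
    have hfy : f y ∈ Icc a c := (hJS hy).2
    have hv : f y ∈ V := by
      rw [hV]; right; right; exact ⟨y, ⟨hyI, hy0⟩, rfl⟩
    exact le_antisymm (hεV _ hv (le_trans hfy.2 hcε')) hfy.1
  have hAa : a ∈ J → f a = a := by
    intro haJ
    have hfy : f a ∈ Icc a c := (hJS haJ).2
    have hv : f a ∈ V := by rw [hV]; left; rfl
    exact le_antisymm (hεV _ hv (le_trans hfy.2 hcε')) hfy.1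
  have hAb : b ∈ J → f b = a := by
    intro hbJ
    have hfy : f b ∈ Icc a c := (hJS hbJ).2
    have hv : f b ∈ V := by rw [hV]; right; left; rfl
    exact le_antisymm (hεV _ hv (le_trans hfy.2 hcε')) hfy.1
  have hC : ∀ u ∈ J, ∀ v ∈ J, u < v → f u = a → f v = a → False := by
    intro u hu v hv huv hfu hfv
    have hsub : Icc u v ⊆ J := hJeq ▸ Icc_subset_Icc (csInf_le hbdd hu) (le_csSup hbddA hv)
    have hsubI : Icc u v ⊆ Icc a b := fun y hy => hJI (hsub hy)
    by_cases hcase : ∀ w ∈ Icc u v, f w ≤ a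
    · have hconst : ∀ w ∈ Icc u v, f w = a := fun w hw =>
        le_antisymm (hcase w hw) (hfa_ge w (hsubI hw))
      have hioo : Ioo u v ⊆ {x ∈ Icc a b | f' x = 0} := by
        intro w hw
        have hwI : w ∈ Icc a b := hsubI (Ioo_subset_Icc_self hw)
        refine ⟨hwI, ?_⟩
        have hnb : Icc u v ∈ nhds w := Icc_mem_nhds hw.1 hw.2
        have heq : f =ᶠ[nhds w] fun _ => a := Filter.eventually_of_mem hnb hconst
        have h0 : HasDerivAt f 0 w := (hasDerivAt_const w a).congr_of_eventuallyEq heq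
        exact (hf w hwI).unique h0
      exact Ioo_infinite huv (hcrit.subset hioo)
    · push_neg at hcase
      obtain ⟨w, hw, hwa⟩ := hcase
      obtain ⟨m, hm, hmmax⟩ :=
        isCompact_Icc.exists_isMaxOn (nonempty_Icc.mpr huv.le) (hfc.mono hsubI)
      have hfm : a < f m := lt_of_lt_of_le hwa (hmmax hw)
      have hmu : u < m := lt_of_le_of_ne hm.1 (by rintro rfl; rw [hfu] at hfm; exact lt_irrefl _ hfm)
      have hmv : m < v := lt_of_le_of_ne hm.2 (by rintro rfl; rw [hfv] at hfm; exact lt_irrefl _ hfm)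
      have hlm : IsLocalMax f m := hmmax.isLocalMax (Icc_mem_nhds hmu hmv)
      have h0 : f' m = 0 := hlm.hasDerivAt_eq_zero (hf m (hsubI hm))
      rw [hA m (hsub hm) h0] at hfm
      exact lt_irrefl _ hfm
  rcases eq_or_lt_of_le (hJI hpJ).1 with hpa | hpa
  · -- p = a : J = [a, q], f increasing bijection onto [a,c]
    have haJ : a ∈ J := hpa ▸ hpJ
    have hfa : f a = a := hAa haJ
    have hqb : q < b := by
      rcases lt_or_eq_of_le (hJI hqJ).2 with h | h
      · exact h
      · exact absurd (hAb (h ▸ hqJ)) (fun hfb => hC a haJ b (h ▸ hqJ) hab hfa hfb)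
    have hfq : f q = c := hL2 hqb
    have haq : a < q := by
      rcases eq_or_lt_of_le (hpa ▸ hpq : a ≤ q) with h | h
      · exact absurd (h ▸ hfq : f a = c) (by rw [hfa]; exact ne_of_lt hca)
      · exact h
    have hJa : J = Icc a q := by rw [hJeq, ← hpa]
    have hpos : ∀ y ∈ J, y ≠ a → a < f y := by
      intro y hy hya
      rcases eq_or_lt_of_le (hfa_ge y (hJI hy)) with h | h
      · exact (hC a haJ y hy (lt_of_le_of_ne (hJI hy).1 (Ne.symm hya)) hfa h.symm).elim
      · exact h
    have hIooI : Ioo a q ⊆ Icc a b := fun y hy => ⟨hy.1.le, hy.2.le.trans hqb.le⟩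
    have hcrit' : ∀ y ∈ Ioo a q, f' y ≠ 0 := by
      intro y hy h0
      have hyJ : y ∈ J := hJa ▸ (⟨hy.1.le, hy.2.le⟩ : y ∈ Icc a q)
      exact absurd (hA y hyJ h0) (ne_of_gt (hpos y hyJ (ne_of_gt hy.1)))
    have hsign : (∀ y ∈ Ioo a q, 0 < f' y) ∨ ∀ y ∈ Ioo a q, f' y < 0 := by
      by_contra hcon
      push_neg at hcon
      obtain ⟨⟨u, hu, hu0⟩, ⟨v, hv, hv0⟩⟩ := hcon
      have h1 : f' u < 0 := lt_of_le_of_ne hu0 (hcrit' u hu)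
      have h2 : 0 < f' v := lt_of_le_of_ne hv0 (Ne.symm (hcrit' v hv))
      have hpre : IsPreconnected (f' '' Ioo a q) := isPreconnected_Ioo.image f' (hf'c.mono hIooI)
      have h0m : (0:ℝ) ∈ f' '' Ioo a q :=
        hpre.ordConnected.out (mem_image_of_mem f' hu) (mem_image_of_mem f' hv) ⟨h1.le, h2.le⟩
      obtain ⟨y, hy, hy0⟩ := h0m
      exact hcrit' y hy hy0
    have hcont' : ContinuousOn f (Icc a q) := hfc.mono (Icc_subset_Icc_right hqb.le)
    have hmono : StrictMonoOn f (Icc a q) := by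
      rcases hsign with h | h
      · apply strictMonoOn_of_deriv_pos (convex_Icc a q) hcont'
        intro y hy
        rw [interior_Icc] at hy
        rw [(hf y (hIooI hy)).deriv]
        exact h y hy
      · exfalso
        have hanti : StrictAntiOn f (Icc a q) := by
          apply strictAntiOn_of_deriv_neg (convex_Icc a q) hcont'
          intro y hy
          rw [interior_Icc] at hy
          rw [(hf y (hIooI hy)).deriv]
          exact h y hy
        have hlt := hanti (left_mem_Icc.mpr haq.le) (right_mem_Icc.mpr haq.le) haq
        rw [hfa] at hlt
        exact absurd hlt (not_lt.mpr (hfa_ge q (hJI hqJ)))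
    left
    refine ⟨Or.inl haJ, ?_⟩
    rw [hJa]
    refine ⟨fun y hy => (hJS (hJa ▸ hy : y ∈ J)).2, hmono.injOn, ?_⟩
    have hIvt := intermediate_value_Icc haq.le hcont'
    rw [hfa, hfq] at hIvt
    exact hIvt
  · rcases lt_or_eq_of_le (hJI hqJ).2 with hqb | hqb
    · -- interior component
      exact Or.inr ⟨hL1 hpa, hL2 hqb⟩
    · -- q = b : J = [p, b], f decreasing bijection onto [a,c]
      have hbJ : b ∈ J := hqb ▸ hqJ
      have hfb : f b = a := hAb hbJ
      have hfp : f p = c := hL1 hpa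
      have hpb : p < b := by
        rcases lt_or_eq_of_le (hqb ▸ hpq : p ≤ b) with h | h
        · exact h
        · exact absurd (h ▸ hfp : f b = c) (by rw [hfb]; exact ne_of_lt hca)
      have hJb : J = Icc p b := by rw [hJeq, hqb]
      have hpos : ∀ y ∈ J, y ≠ b → a < f y := by
        intro y hy hyb
        rcases eq_or_lt_of_le (hfa_ge y (hJI hy)) with h | h
        · exact (hC y hy b hbJ (lt_of_le_of_ne (hJI hy).2 hyb) h.symm hfb).elim
        · exact h
      have hIooI : Ioo p b ⊆ Icc a b := fun y hy => ⟨(hJI hpJ).1.trans hy.1.le, hy.2.le⟩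
      have hcrit' : ∀ y ∈ Ioo p b, f' y ≠ 0 := by
        intro y hy h0
        have hyJ : y ∈ J := hJb ▸ (⟨hy.1.le, hy.2.le⟩ : y ∈ Icc p b)
        exact absurd (hA y hyJ h0) (ne_of_gt (hpos y hyJ (ne_of_lt hy.2)))
      have hsign : (∀ y ∈ Ioo p b, 0 < f' y) ∨ ∀ y ∈ Ioo p b, f' y < 0 := by
        by_contra hcon
        push_neg at hcon
        obtain ⟨⟨u, hu, hu0⟩, ⟨v, hv, hv0⟩⟩ := hcon
        have h1 : f' u < 0 := lt_of_le_of_ne hu0 (hcrit' u hu)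
        have h2 : 0 < f' v := lt_of_le_of_ne hv0 (Ne.symm (hcrit' v hv))
        have hpre : IsPreconnected (f' '' Ioo p b) := isPreconnected_Ioo.image f' (hf'c.mono hIooI)
        have h0m : (0:ℝ) ∈ f' '' Ioo p b :=
          hpre.ordConnected.out (mem_image_of_mem f' hu) (mem_image_of_mem f' hv) ⟨h1.le, h2.le⟩
        obtain ⟨y, hy, hy0⟩ := h0m
        exact hcrit' y hy hy0
      have hcont' : ContinuousOn f (Icc p b) := hfc.mono (Icc_subset_Icc_left (hJI hpJ).1)
      have hanti : StrictAntiOn f (Icc p b) := by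
        rcases hsign with h | h
        · exfalso
          have hmono : StrictMonoOn f (Icc p b) := by
            apply strictMonoOn_of_deriv_pos (convex_Icc p b) hcont'
            intro y hy
            rw [interior_Icc] at hy
            rw [(hf y (hIooI hy)).deriv]
            exact h y hy
          have hlt := hmono (left_mem_Icc.mpr hpb.le) (right_mem_Icc.mpr hpb.le) hpb
          rw [hfp, hfb] at hlt
          exact absurd hlt (not_lt.mpr hca.le)
        · apply strictAntiOn_of_deriv_neg (convex_Icc p b) hcont'
          intro y hy
          rw [interior_Icc] at hy
          rw [(hf y (hIooI hy)).deriv]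
          exact h y hy
      left
      refine ⟨Or.inr hbJ, ?_⟩
      rw [hJb]
      refine ⟨fun y hy => (hJS (hJb ▸ hy : y ∈ J)).2, hanti.injOn, ?_⟩
      have hIvt := intermediate_value_Icc' hpb.le hcont'
      rw [hfp, hfb] at hIvt
      exact hIvt

theorem stmt17 (a b : ℝ) (hab : a < b) (f : ℝ → ℝ) (f' : ℝ → ℝ)
    (hf : ∀ x ∈ Set.Icc a b, HasDerivAt f (f' x) x)
    (hf'c : ContinuousOn f' (Set.Icc a b))
    (hcrit : {x ∈ Set.Icc a b | f' x = 0}.Finite)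
    (hmaps : Set.MapsTo f (Set.Icc a b) (Set.Icc a b)) :
    ∃ ε > 0,
      (∀ c ∈ Set.Icc a b, c - a ≤ ε →
        ∀ x ∈ Set.Icc a b, f x ∈ Set.Icc a c →
          ∀ J : Set ℝ, J = connectedComponentIn (Set.Icc a b ∩ f ⁻¹' Set.Icc a c) x →
            ((a ∈ J ∨ b ∈ J) ∧ Set.BijOn f J (Set.Icc a c)) ∨
            (f (sInf J) = c ∧ f (sSup J) = c)) ∧
      (∀ c ∈ Set.Icc a b, b - c ≤ ε →
        ∀ x ∈ Set.Icc a b, f x ∈ Set.Icc c b →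
          ∀ J : Set ℝ, J = connectedComponentIn (Set.Icc a b ∩ f ⁻¹' Set.Icc c b) x →
            ((a ∈ J ∨ b ∈ J) ∧ Set.BijOn f J (Set.Icc c b)) ∨
            (f (sInf J) = c ∧ f (sSup J) = c)) := by
  obtain ⟨ε₁, hε₁, hkey₁⟩ := stmt17_key a b hab f f' hf hf'c hcrit hmaps
  set g : ℝ → ℝ := fun y => a + b - f (a + b - y) with hg
  set g' : ℝ → ℝ := fun y => f' (a + b - y) with hg'
  have hmem : ∀ y : ℝ, y ∈ Icc a b → a + b - y ∈ Icc a b := fun y hy =>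
    ⟨by linarith [hy.2], by linarith [hy.1]⟩
  have hinv : ∀ y : ℝ, a + b - (a + b - y) = y := fun y => by ring
  have hgderiv : ∀ y ∈ Icc a b, HasDerivAt g (g' y) y := by
    intro y hy
    have h1 : HasDerivAt (fun z : ℝ => a + b - z) (-1) y := by
      simpa using (hasDerivAt_id y).const_sub (a + b)
    have h2 := (hf _ (hmem y hy)).comp y h1
    have h3 := h2.const_sub (a + b)
    simp only [Function.comp] at h3
    exact h3.congr_deriv (by simp only [hg']; ring)
  have hg'c : ContinuousOn g' (Icc a b) :=
    hf'c.comp ((continuous_const.sub continuous_id).continuousOn) (fun y hy => hmem y hy)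
  have hgcrit : {y ∈ Icc a b | g' y = 0}.Finite := by
    apply Set.Finite.subset (hcrit.image (fun z => a + b - z))
    rintro y ⟨hy, hy0⟩
    exact ⟨a + b - y, ⟨hmem y hy, hy0⟩, hinv y⟩
  have hgmaps : MapsTo g (Icc a b) (Icc a b) := by
    intro y hy
    have h := hmaps (hmem y hy)
    exact ⟨by simp only [hg]; linarith [h.2], by simp only [hg]; linarith [h.1]⟩
  obtain ⟨ε₂, hε₂, hkey₂⟩ := stmt17_key a b hab g g' hgderiv hg'c hgcrit hgmaps
  refine ⟨min ε₁ ε₂, lt_min hε₁ hε₂, ?_, ?_⟩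
  · intro c hc hcε x hx hfx J hJ
    exact hkey₁ c hc (hcε.trans (min_le_left _ _)) x hx hfx J hJ
  · intro c hc hcε x hx hfx J hJ
    have himg : ∀ (T : Set ℝ) (y : ℝ), y ∈ (fun z => a + b - z) '' T ↔ a + b - y ∈ T := by
      intro T y
      constructor
      · rintro ⟨z, hz, rfl⟩
        simpa [hinv z] using hz
      · intro h
        exact ⟨a + b - y, h, hinv y⟩
    have hSg : Icc a b ∩ g ⁻¹' Icc a (a + b - c) =
        (fun y => a + b - y) '' (Icc a b ∩ f ⁻¹' Icc c b) := by
      ext y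
      rw [himg]
      simp only [mem_inter_iff, mem_preimage, mem_Icc, hg]
      constructor
      · rintro ⟨⟨h1, h2⟩, h3, h4⟩
        exact ⟨⟨by linarith, by linarith⟩, by linarith, by linarith⟩
      · rintro ⟨⟨h1, h2⟩, h3, h4⟩
        exact ⟨⟨by linarith, by linarith⟩, by linarith, by linarith⟩
    have hxS : x ∈ Icc a b ∩ f ⁻¹' Icc c b := ⟨hx, hfx⟩
    have hJtil : connectedComponentIn (Icc a b ∩ g ⁻¹' Icc a (a + b - c)) (a + b - x) =
        (fun y => a + b - y) '' J := by
      rw [hSg, hJ]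
      have := (stmt17ReflHomeo (a + b)).image_connectedComponentIn hxS
      rw [stmt17ReflHomeo_coe] at this
      exact this.symm
    have hgx : g (a + b - x) ∈ Icc a (a + b - c) := by
      have : g (a + b - x) = a + b - f x := by
        simp only [hg]; rw [hinv x]
      rw [this]
      exact ⟨by linarith [hfx.2], by linarith [hfx.1]⟩
    have hres := hkey₂ (a + b - c) ⟨by linarith [hc.2], by linarith [hc.1]⟩
      (by have := hcε.trans (min_le_right ε₁ ε₂); linarith)
      (a + b - x) (hmem x hx) hgx _ rfl
    rw [hJtil] at hres
    have hJx : x ∈ J := hJ ▸ mem_connectedComponentIn hxS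
    have hJne : J.Nonempty := ⟨x, hJx⟩
    have hJI : J ⊆ Icc a b := hJ ▸ fun y hy =>
      (connectedComponentIn_subset _ _ hy).1
    have hbddB : BddBelow J := ⟨a, fun y hy => (hJI hy).1⟩
    have hbddA : BddAbove J := ⟨b, fun y hy => (hJI hy).2⟩
    have hinf : sInf ((fun y => a + b - y) '' J) = a + b - sSup J :=
      stmt17_csInf_const_sub (a + b) hJne hbddA
    have hsup : sSup ((fun y => a + b - y) '' J) = a + b - sInf J :=
      stmt17_csSup_const_sub (a + b) hJne hbddB
    rcases hres with ⟨hend, hbij⟩ | ⟨h1, h2⟩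
    · left
      constructor
      · rcases hend with h | h
        · right
          have := (himg J a).mp h
          simpa using this
        · left
          have := (himg J b).mp h
          simpa using this
      · have hb1 : BijOn (fun y => a + b - y) J ((fun y => a + b - y) '' J) := by
          apply Set.InjOn.bijOn_image
          intro u _ v _ huv
          simp only at huv
          linarith
        have hb2 : BijOn (fun y => a + b - y) (Icc a (a + b - c)) (Icc c b) := by
          have h1 : (fun y => a + b - y) '' Icc a (a + b - c) = Icc c b := by
            rw [image_const_sub_Icc]
            congr 1 <;> ring
          have := Set.InjOn.bijOn_image (f := fun y => a + b - y) (s := Icc a (a + b - c))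
            (by intro u _ v _ huv; simp only at huv; linarith)
          rwa [h1] at this
        have hcomp := hb2.comp (hbij.comp hb1)
        apply hcomp.congr
        intro y hy
        simp only [Function.comp, hg]
        rw [hinv]
        ring
    · right
      rw [hinf] at h1
      rw [hsup] at h2
      simp only [hg] at h1 h2
      rw [hinv] at h1
      rw [hinv] at h2
      constructor <;> linarith
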